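/- In a category of fibrant objects in which every trivial fibration admits a section, if f ≃ g (f is homotopic to g) then u∘f ≃ u∘g and f∘v ≃ g∘v whenever these compositions are defined. -/

import Mathlib

open CategoryTheory Limits

universe u v

/-- A category of fibrant objects in the sense of K. Brown: distinguished classes of
fibrations and weak equivalences, satisfying Brown's axioms (2-out-of-3, closure under
composition, every object fibrant, base change of (trivial) fibrations, existence of
path space objects and of factorizations). -/
structure BrownCFO (C : Type u) [Category.{v} C] [HasTerminal C] [HasBinaryProducts C] where
  /-- the class of fibrations -/
  Fib : ∀ {X Y : C}, (X ⟶ Y) → Prop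
  /-- the class of weak equivalences -/
  Weq : ∀ {X Y : C}, (X ⟶ Y) → Prop
  weq_id : ∀ X : C, Weq (𝟙 X)
  weq_of_comp_left : ∀ {X Y Z : C} (f : X ⟶ Y) (g : Y ⟶ Z), Weq f → Weq (f ≫ g) → Weq g
  weq_of_comp_right : ∀ {X Y Z : C} (f : X ⟶ Y) (g : Y ⟶ Z), Weq g → Weq (f ≫ g) → Weq f
  weq_comp : ∀ {X Y Z : C} (f : X ⟶ Y) (g : Y ⟶ Z), Weq f → Weq g → Weq (f ≫ g)
  fib_id : ∀ X : C, Fib (𝟙 X)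
  fib_comp : ∀ {X Y Z : C} (f : X ⟶ Y) (g : Y ⟶ Z), Fib f → Fib g → Fib (f ≫ g)
  /-- every object is fibrant -/
  fib_terminal : ∀ X : C, Fib (terminal.from X)
  /-- pullbacks along fibrations exist -/
  hasPullback_of_fib : ∀ {X Y Z : C} (f : X ⟶ Z) (g : Y ⟶ Z), Fib g → HasPullback f g
  /-- fibrations are stable under base change -/
  fib_stable : ∀ {X Y Z : C} (f : X ⟶ Z) (g : Y ⟶ Z), Fib g →
    ∀ [HasPullback f g], Fib (pullback.fst f g)
  /-- trivial fibrations are stable under base change -/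
  trivFib_stable : ∀ {X Y Z : C} (f : X ⟶ Z) (g : Y ⟶ Z), Fib g → Weq g →
    ∀ [HasPullback f g], Weq (pullback.fst f g)
  /-- existence of path space objects -/
  pathObj : ∀ Y : C, ∃ (P : C) (ι : Y ⟶ P) (e : P ⟶ Y ⨯ Y),
    Weq ι ∧ Fib e ∧ ι ≫ e = prod.lift (𝟙 Y) (𝟙 Y)
  /-- every morphism factors as a weak equivalence followed by a fibration -/
  factor : ∀ {X Y : C} (f : X ⟶ Y), ∃ (Z : C) (w : X ⟶ Z) (p : Z ⟶ Y),
    Weq w ∧ Fib p ∧ w ≫ p = f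

/-- Two morphisms `f g : X ⟶ Y` are homotopic if there is a path space object `P` for `Y`
and a morphism `h : X ⟶ P` whose compositions with the two evaluation maps are `f`
and `g`. -/
def BrownCFO.Homotopic {C : Type u} [Category.{v} C] [HasTerminal C] [HasBinaryProducts C]
    (S : BrownCFO C) {X Y : C} (f g : X ⟶ Y) : Prop :=
  ∃ (P : C) (ι : Y ⟶ P) (e : P ⟶ Y ⨯ Y),
    S.Weq ι ∧ S.Fib e ∧ ι ≫ e = prod.lift (𝟙 Y) (𝟙 Y) ∧
    ∃ h : X ⟶ P, h ≫ e ≫ prod.fst = f ∧ h ≫ e ≫ prod.snd = g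

/-- In a category of fibrant objects in which every trivial fibration admits a section,
homotopy is compatible with composition on both sides: if `f ≃ g` then `u∘f ≃ u∘g`
and `f∘v ≃ g∘v`. -/
theorem stmt_8 {C : Type u} [Category.{v} C] [HasTerminal C] [HasBinaryProducts C]
    (S : BrownCFO C)
    (hsec : ∀ {X Y : C} (t : X ⟶ Y), S.Fib t → S.Weq t → ∃ s : Y ⟶ X, s ≫ t = 𝟙 Y)
    {W X Y Z : C} (f g : X ⟶ Y) (hfg : S.Homotopic f g) (u : Y ⟶ Z) (v : W ⟶ X) :
    S.Homotopic (f ≫ u) (g ≫ u) ∧ S.Homotopic (v ≫ f) (v ≫ g) := by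
  obtain ⟨P, ι, e, hι, he, hιe, h, hf, hg⟩ := hfg
  constructor
  · -- post-composition
    obtain ⟨P', ι', e', hι', he', hιe'⟩ := S.pathObj Z
    set φ : P ⟶ Z ⨯ Z := e ≫ prod.map u u with hφ
    haveI : HasPullback φ e' := S.hasPullback_of_fib φ e' he'
    have hcond : ι ≫ φ = (u ≫ ι') ≫ e' := by
      rw [hφ, ← Category.assoc, hιe, Category.assoc, hιe']
      ext <;> simp
    let w : Y ⟶ pullback φ e' := pullback.lift ι (u ≫ ι') hcond
    obtain ⟨T', w', q, hw', hq, hwq⟩ := S.factor w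
    have hp1 : S.Fib (pullback.fst φ e') := S.fib_stable φ e' he'
    have ha : S.Fib (q ≫ pullback.fst φ e') := S.fib_comp _ _ hq hp1
    have hwa : w' ≫ q ≫ pullback.fst φ e' = ι := by
      rw [← Category.assoc, hwq]; simp [w]; exact pullback.lift_fst _ _ _
    have haw : S.Weq (q ≫ pullback.fst φ e') := by
      refine S.weq_of_comp_left w' _ hw' ?_
      rw [hwa]; exact hι
    obtain ⟨s, hs⟩ := hsec _ ha haw
    refine ⟨P', ι', e', hι', he', hιe', h ≫ s ≫ q ≫ pullback.snd φ e', ?_, ?_⟩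
    · have : (s ≫ q ≫ pullback.snd φ e') ≫ e' = φ := by
        rw [Category.assoc, Category.assoc, ← pullback.condition, ← Category.assoc,
          ← Category.assoc, ← Category.assoc] at *
        rw [hs, Category.id_comp]
      rw [Category.assoc, ← Category.assoc (s ≫ q ≫ pullback.snd φ e'), this, hφ]
      simp only [Category.assoc, prod.map_fst, ← Category.assoc, ← hf]
      simp
    · have : (s ≫ q ≫ pullback.snd φ e') ≫ e' = φ := by
        rw [Category.assoc, Category.assoc, ← pullback.condition, ← Category.assoc,
          ← Category.assoc, ← Category.assoc] at *
        rw [hs, Category.id_comp]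
      rw [Category.assoc, ← Category.assoc (s ≫ q ≫ pullback.snd φ e'), this, hφ]
      simp only [Category.assoc, prod.map_snd, ← Category.assoc, ← hg]
      simp
  · exact ⟨P, ι, e, hι, he, hιe, v ≫ h, by simp [hf], by simp [hg]⟩
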